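/- Let G₁ be a 3r₁-regular graph admitting a neighborhood 3-balanced coloring and G₂ a 2r₂-regular graph admitting a neighborhood 2-balanced coloring (a coloring by {+1, −1} such that each vertex has equally many neighbors of each sign). Then the tensor product G₁ × G₂ admits a neighborhood 3-balanced coloring, given by ℓ(u, v) = ℓ₁(u)·ℓ₂(v) where ℓ₁ takes values in ℤ/3 and ℓ₂ in {±1}. -/

import Mathlib

/-- A coloring `ℓ : V → ZMod 3` of a simple graph `G` is neighborhood 3-balanced if
every vertex has an equal number of neighbors of each of the three colors. -/
def NBalanced {V : Type*} (G : SimpleGraph V) (ℓ : V → ZMod 3) : Prop :=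
  ∀ v : V, ∀ i j : ZMod 3,
    {w | G.Adj v w ∧ ℓ w = i}.ncard = {w | G.Adj v w ∧ ℓ w = j}.ncard

/-- The tensor (categorical) product of two simple graphs: `(u, v)` is adjacent to
`(u', v')` iff `u u' ∈ E(G₁)` and `v v' ∈ E(G₂)`. -/
def tensorProd {V₁ V₂ : Type*} (G₁ : SimpleGraph V₁) (G₂ : SimpleGraph V₂) :
    SimpleGraph (V₁ × V₂) where
  Adj a b := G₁.Adj a.1 b.1 ∧ G₂.Adj a.2 b.2
  symm := ⟨fun _ _ h => ⟨h.1.symm, h.2.symm⟩⟩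
  loopless := ⟨fun a h => G₁.loopless.irrefl a.1 h.1⟩

/-- A coloring by `{1, -1} ⊆ ℤ` is neighborhood 2-balanced if every vertex has an
equal number of neighbors of each sign. -/
def NBalanced2 {V : Type*} (G : SimpleGraph V) (ℓ : V → ℤ) : Prop :=
  (∀ v, ℓ v = 1 ∨ ℓ v = -1) ∧
    ∀ v : V, {w | G.Adj v w ∧ ℓ w = 1}.ncard = {w | G.Adj v w ∧ ℓ w = -1}.ncard

lemma ncard_prod' {α β : Type*} (s : Set α) (t : Set β) :
    (s ×ˢ t).ncard = s.ncard * t.ncard := by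
  rw [← Nat.card_coe_set_eq, ← Nat.card_coe_set_eq, ← Nat.card_coe_set_eq, Nat.card_congr (Equiv.Set.prod s t), Nat.card_prod]

theorem stmt16 {V₁ V₂ : Type*} [Fintype V₁] [Fintype V₂]
    (G₁ : SimpleGraph V₁) (G₂ : SimpleGraph V₂) (r₁ r₂ : ℕ)
    (hr₁ : 0 < r₁) (hr₂ : 0 < r₂)
    (hreg₁ : ∀ v, {w | G₁.Adj v w}.ncard = 3 * r₁)
    (hreg₂ : ∀ v, {w | G₂.Adj v w}.ncard = 2 * r₂)
    (ℓ₁ : V₁ → ZMod 3) (h₁ : NBalanced G₁ ℓ₁)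
    (ℓ₂ : V₂ → ℤ) (h₂ : NBalanced2 G₂ ℓ₂) :
    NBalanced (tensorProd G₁ G₂) (fun p => (ℓ₂ p.2 : ZMod 3) * ℓ₁ p.1) := by
  rintro ⟨u, v⟩ i j
  have key : ∀ i : ZMod 3,
      {w : V₁ × V₂ | (tensorProd G₁ G₂).Adj (u, v) w ∧ (ℓ₂ w.2 : ZMod 3) * ℓ₁ w.1 = i}
        = ({u' | G₁.Adj u u' ∧ ℓ₁ u' = i} ×ˢ {v' | G₂.Adj v v' ∧ ℓ₂ v' = 1})
          ∪ ({u' | G₁.Adj u u' ∧ ℓ₁ u' = -i} ×ˢ {v' | G₂.Adj v v' ∧ ℓ₂ v' = -1}) := by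
    intro i
    ext ⟨u', v'⟩
    simp only [Set.mem_setOf_eq, Set.mem_union, Set.mem_prod, tensorProd]
    constructor
    · rintro ⟨⟨hu, hv⟩, hc⟩
      rcases h₂.1 v' with hs | hs
      · left
        refine ⟨⟨hu, ?_⟩, hv, hs⟩
        rw [hs] at hc; push_cast at hc; linear_combination hc
      · right
        refine ⟨⟨hu, ?_⟩, hv, hs⟩
        rw [hs] at hc; push_cast at hc; linear_combination -hc
    · rintro (⟨⟨hu, hc⟩, hv, hs⟩ | ⟨⟨hu, hc⟩, hv, hs⟩) <;>
        refine ⟨⟨hu, hv⟩, ?_⟩ <;> rw [hs, hc] <;> push_cast <;> ring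
  have hdisj : ∀ i : ZMod 3, Disjoint
      ({u' | G₁.Adj u u' ∧ ℓ₁ u' = i} ×ˢ {v' | G₂.Adj v v' ∧ ℓ₂ v' = 1})
      ({u' | G₁.Adj u u' ∧ ℓ₁ u' = -i} ×ˢ {v' | G₂.Adj v v' ∧ ℓ₂ v' = -1}) := by
    intro i
    rw [Set.disjoint_left]
    rintro ⟨u', v'⟩ ⟨_, _, h1⟩ ⟨_, _, h2⟩
    omega
  have count : ∀ i : ZMod 3,
      {w : V₁ × V₂ | (tensorProd G₁ G₂).Adj (u, v) w ∧ (ℓ₂ w.2 : ZMod 3) * ℓ₁ w.1 = i}.ncard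
        = {u' | G₁.Adj u u' ∧ ℓ₁ u' = i}.ncard * {v' | G₂.Adj v v' ∧ ℓ₂ v' = 1}.ncard
          + {u' | G₁.Adj u u' ∧ ℓ₁ u' = -i}.ncard * {v' | G₂.Adj v v' ∧ ℓ₂ v' = -1}.ncard := by
    intro i
    rw [key i, Set.ncard_union_eq (hdisj i) (Set.toFinite _) (Set.toFinite _),
      ncard_prod', ncard_prod']
  rw [count i, count j, h₁ u i j, h₁ u (-i) (-j)]
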